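/- Let x₁, …, x_m, y, z be vectors in EuclideanSpace ℝ (Fin d) with m ≥ 1, and suppose that for every coordinate j, min_i (x_i) j ≤ z j ≤ max_i (x_i) j. Then ‖z − y‖² ≤ ∑_{i=1}^{m} ‖x_i − y‖². -/
import Mathlib


/-- Paper's eq. 14 — the squared distance of a coordinate-wise
intermediate vector `z` to `y` is bounded by the sum of squared distances of the
`x i` to `y`. -/
theorem coordinatewise_median_sq_dist_le_sum
    (d m : ℕ) (hm : 1 ≤ m)
    (x : Fin m → EuclideanSpace ℝ (Fin d)) (y z : EuclideanSpace ℝ (Fin d))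
    (hz : ∀ j : Fin d, (⨅ i, x i j) ≤ z j ∧ z j ≤ ⨆ i, x i j) :
    ‖z - y‖ ^ 2 ≤ ∑ i, ‖x i - y‖ ^ 2 := by
  have hne : Nonempty (Fin m) := ⟨⟨0, hm⟩⟩
  have key : ∀ j : Fin d, (z j - y j) ^ 2 ≤ ∑ i, (x i j - y j) ^ 2 := by
    intro j
    have hsum : ∀ i : Fin m, (x i j - y j) ^ 2 ≤ ∑ i, (x i j - y j) ^ 2 := by
      intro i
      exact Finset.single_le_sum (f := fun i => (x i j - y j) ^ 2) (fun i _ => sq_nonneg _) (Finset.mem_univ i)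
    rcases le_total (y j) (z j) with h | h
    · obtain ⟨i1, hi1⟩ := Finite.exists_max (fun i => x i j)
      have hs : z j ≤ x i1 j := le_trans (hz j).2 (ciSup_le hi1)
      calc (z j - y j) ^ 2 ≤ (x i1 j - y j) ^ 2 := by nlinarith
        _ ≤ _ := hsum i1
    · obtain ⟨i0, hi0⟩ := Finite.exists_min (fun i => x i j)
      have hs : x i0 j ≤ z j := le_trans (le_ciInf hi0) (hz j).1
      calc (z j - y j) ^ 2 ≤ (x i0 j - y j) ^ 2 := by nlinarith
        _ ≤ _ := hsum i0
  have norm_sq : ∀ v : EuclideanSpace ℝ (Fin d), ‖v‖ ^ 2 = ∑ j, (v j) ^ 2 := by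
    intro v
    rw [EuclideanSpace.norm_eq, Real.sq_sqrt (Finset.sum_nonneg fun j _ => sq_nonneg _)]
    simp [sq_abs]
  rw [norm_sq]
  simp only [norm_sq]
  rw [Finset.sum_comm]
  apply Finset.sum_le_sum
  intro j _
  simpa using key j
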